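/- arXiv:2112.07424 — 4 statements merged into one kernel-verified Lean document; each statement's English description precedes it below -/
import Mathlib

section
/- Let M = (S, A, R, ρ) be a finite MDP with discount factor γ ∈ (0,1). Let η be a distributional collection with finite first moments and let a* : S → A be any greedy selection for η. Then every measure (T*η)^{(s,a)} is a Borel probability measure on ℝ with finite first moment, and its induced Q-function satisfies Q_{T*η}(s,a) = Σ_{(r,s') ∈ R×S} ρ(r,s'|s,a)·(r + γ·max_{a'∈A} Q_η(s',a')) = (𝒯* Q_η)(s,a) for all (s,a) ∈ S×A. -/
open MeasureTheory

lemma map_affine_facts (μ : Measure ℝ) [IsProbabilityMeasure μ]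
    (hint : Integrable (fun z : ℝ => z) μ) (r γ : ℝ) :
    IsProbabilityMeasure (Measure.map (fun z => r + γ * z) μ) ∧
    Integrable (fun z : ℝ => z) (Measure.map (fun z => r + γ * z) μ) ∧
    ∫ z, z ∂(Measure.map (fun z => r + γ * z) μ) = r + γ * ∫ z, z ∂μ := by
  have hmeas : Measurable (fun z : ℝ => r + γ * z) :=
    (measurable_id.const_mul γ).const_add r
  have hi : Integrable (fun z : ℝ => r + γ * z) μ :=
    (integrable_const r).add (hint.const_mul γ)
  have hid : AEStronglyMeasurable (fun z : ℝ => z)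
      (Measure.map (fun z => r + γ * z) μ) := aestronglyMeasurable_id
  refine ⟨Measure.isProbabilityMeasure_map hmeas.aemeasurable, ?_, ?_⟩
  · rw [integrable_map_measure hid hmeas.aemeasurable]
    exact hi
  · rw [integral_map hmeas.aemeasurable hid]
    rw [integral_add (integrable_const r) (hint.const_mul γ), integral_const,
      integral_const_mul]
    simp

/-- For a finite MDP, the distributional Bellman optimality operator `T*`
produces Borel probability measures on `ℝ` with finite first moments, and the induced
Q-function of `T* η` equals the Bellman optimality operator applied to `Q_η`. -/
theorem induced_Q_of_distributional_optimality_operator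
    {S A : Type} [Fintype S] [Fintype A] [Nonempty S] [Nonempty A]
    (R : Finset ℝ) (ρ : S → A → ℝ → S → ℝ)
    (hρ_nonneg : ∀ s a r s', 0 ≤ ρ s a r s')
    (hρ_sum : ∀ s a, ∑ r ∈ R, ∑ s' : S, ρ s a r s' = 1)
    (γ : ℝ) (hγ : γ ∈ Set.Ioo (0 : ℝ) 1)
    (η : S → A → Measure ℝ)
    (hη_prob : ∀ s a, IsProbabilityMeasure (η s a))
    (hη_int : ∀ s a, Integrable (fun z : ℝ => z) (η s a))
    (Qη : S → A → ℝ)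
    (hQη : ∀ s a, Qη s a = ∫ z, z ∂(η s a))
    (astar : S → A)
    (hastar : ∀ s', Qη s' (astar s') =
      Finset.univ.sup' Finset.univ_nonempty (fun a' => Qη s' a'))
    (Tη : S → A → Measure ℝ)
    (hTη : ∀ s a, Tη s a = ∑ r ∈ R, ∑ s' : S,
      ENNReal.ofReal (ρ s a r s') •
        Measure.map (fun z => r + γ * z) (η s' (astar s'))) :
    (∀ s a, IsProbabilityMeasure (Tη s a)) ∧
    (∀ s a, Integrable (fun z : ℝ => z) (Tη s a)) ∧
    (∀ s a, ∫ z, z ∂(Tη s a) =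
      ∑ r ∈ R, ∑ s' : S, ρ s a r s' *
        (r + γ * Finset.univ.sup' Finset.univ_nonempty (fun a' => Qη s' a'))) := by
  -- facts about each summand
  have hfacts : ∀ (r : ℝ) (s' : S),
      IsProbabilityMeasure (Measure.map (fun z => r + γ * z) (η s' (astar s'))) ∧
      Integrable (fun z : ℝ => z) (Measure.map (fun z => r + γ * z) (η s' (astar s'))) ∧
      ∫ z, z ∂(Measure.map (fun z => r + γ * z) (η s' (astar s'))) =
        r + γ * ∫ z, z ∂(η s' (astar s')) := by
    intro r s'
    haveI := hη_prob s' (astar s')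
    exact map_affine_facts _ (hη_int s' (astar s')) r γ
  refine ⟨?_, ?_, ?_⟩
  · -- probability
    intro s a
    constructor
    rw [hTη s a]
    rw [Measure.finset_sum_apply, ← ENNReal.ofReal_one, ← hρ_sum s a]
    rw [ENNReal.ofReal_sum_of_nonneg (fun r _ => Finset.sum_nonneg fun s' _ => hρ_nonneg s a r s')]
    refine Finset.sum_congr rfl fun r _ => ?_
    rw [Measure.finset_sum_apply,
      ENNReal.ofReal_sum_of_nonneg (fun s' _ => hρ_nonneg s a r s')]
    refine Finset.sum_congr rfl fun s' _ => ?_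
    haveI := (hfacts r s').1
    rw [Measure.smul_apply, measure_univ, smul_eq_mul, mul_one]
  · -- integrability
    intro s a
    rw [hTη s a]
    exact integrable_finset_sum_measure.mpr fun r _ =>
      integrable_finset_sum_measure.mpr fun s' _ =>
        ((hfacts r s').2.1).smul_measure ENNReal.ofReal_ne_top
  · -- integral
    intro s a
    have hint1 : ∀ r ∈ R, Integrable (fun z : ℝ => z)
        (∑ s' : S, ENNReal.ofReal (ρ s a r s') •
          Measure.map (fun z => r + γ * z) (η s' (astar s'))) :=
      fun r _ => integrable_finset_sum_measure.mpr fun s' _ =>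
        ((hfacts r s').2.1).smul_measure ENNReal.ofReal_ne_top
    rw [hTη s a, integral_finset_sum_measure hint1]
    refine Finset.sum_congr rfl fun r _ => ?_
    rw [integral_finset_sum_measure (fun s' _ =>
      ((hfacts r s').2.1).smul_measure ENNReal.ofReal_ne_top)]
    refine Finset.sum_congr rfl fun s' _ => ?_
    rw [integral_smul_measure, ENNReal.toReal_ofReal (hρ_nonneg s a r s'),
      (hfacts r s').2.2, smul_eq_mul, ← hQη, hastar]
end

section
/- Let M = (S, A, R, ρ) be a finite MDP with discount factor γ ∈ (0,1) and let η_0 be a distributional collection with finite first moments. Define iterates η_{k+1} := T*η_k, where at each step an arbitrary greedy selection for η_k is used. Then every η_k is a distributional collection with finite first moments, and the induced Q-functions Q_k := Q_{η_k} satisfy Q_{k+1} = 𝒯* Q_k for all k ≥ 0. -/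
open MeasureTheory

/-- Iterates of the distributional Bellman optimality operator (with an
arbitrary greedy selection at each step) starting from a distributional collection with
finite first moments remain probability measures with finite first moments, and the
induced Q-functions satisfy the Bellman iteration `Q_{k+1} = 𝒯* Q_k`. -/
theorem distributional_iterates_induce_bellman_iteration
    {S A : Type} [Fintype S] [Fintype A] [Nonempty S] [Nonempty A]
    (R : Finset ℝ) (ρ : S → A → ℝ → S → ℝ)
    (hρ_nonneg : ∀ s a r s', 0 ≤ ρ s a r s')
    (hρ_sum : ∀ s a, ∑ r ∈ R, ∑ s' : S, ρ s a r s' = 1)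
    (γ : ℝ) (hγ : γ ∈ Set.Ioo (0 : ℝ) 1)
    (η : ℕ → S → A → Measure ℝ)
    (hη0_prob : ∀ s a, IsProbabilityMeasure (η 0 s a))
    (hη0_int : ∀ s a, Integrable (fun z : ℝ => z) (η 0 s a))
    (astar : ℕ → S → A)
    (hgreedy : ∀ k s', (∫ z, z ∂(η k s' (astar k s'))) =
      Finset.univ.sup' Finset.univ_nonempty (fun a' => ∫ z, z ∂(η k s' a')))
    (hstep : ∀ k s a, η (k + 1) s a = ∑ r ∈ R, ∑ s' : S,
      ENNReal.ofReal (ρ s a r s') •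
        Measure.map (fun z => r + γ * z) (η k s' (astar k s'))) :
    (∀ k s a, IsProbabilityMeasure (η k s a)) ∧
    (∀ k s a, Integrable (fun z : ℝ => z) (η k s a)) ∧
    (∀ k s a, ∫ z, z ∂(η (k + 1) s a) =
      ∑ r ∈ R, ∑ s' : S, ρ s a r s' *
        (r + γ * Finset.univ.sup' Finset.univ_nonempty
          (fun a' => ∫ z, z ∂(η k s' a')))) := by
  have hf : ∀ r : ℝ, Measurable (fun z : ℝ => r + γ * z) :=
    fun r => measurable_const.add (measurable_id.const_mul γ)
  have main : ∀ k, (∀ s a, IsProbabilityMeasure (η k s a)) ∧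
      (∀ s a, Integrable (fun z : ℝ => z) (η k s a)) := by
    intro k
    induction k with
    | zero => exact ⟨hη0_prob, hη0_int⟩
    | succ k ih =>
      obtain ⟨ihp, ihi⟩ := ih
      have hmap_prob : ∀ (r : ℝ) s',
          IsProbabilityMeasure
            (Measure.map (fun z => r + γ * z) (η k s' (astar k s'))) := by
        intro r s'
        haveI := ihp s' (astar k s')
        exact Measure.isProbabilityMeasure_map (hf r).aemeasurable
      have hmap_int : ∀ (r : ℝ) s',
          Integrable (fun z : ℝ => z)
            (Measure.map (fun z => r + γ * z) (η k s' (astar k s'))) := by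
        intro r s'
        rw [integrable_map_measure measurable_id'.aestronglyMeasurable (hf r).aemeasurable]
        exact (integrable_const r).add ((ihi s' (astar k s')).const_mul γ)
      constructor
      · intro s a
        rw [hstep k s a]
        constructor
        simp only [Measure.coe_finset_sum, Finset.sum_apply, Measure.smul_apply,
          smul_eq_mul]
        rw [Finset.sum_congr rfl fun r hr => Finset.sum_congr rfl fun s' _ => by
          rw [(hmap_prob r s').measure_univ, mul_one]]
        rw [← ENNReal.ofReal_one, ← hρ_sum s a,
          ENNReal.ofReal_sum_of_nonneg fun r _ =>
            Finset.sum_nonneg fun s' _ => hρ_nonneg s a r s']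
        exact Finset.sum_congr rfl fun r _ =>
          (ENNReal.ofReal_sum_of_nonneg fun s' _ => hρ_nonneg s a r s').symm
      · intro s a
        rw [hstep k s a]
        refine integrable_finset_sum_measure.mpr fun r hr => ?_
        refine integrable_finset_sum_measure.mpr fun s' _ => ?_
        exact (hmap_int r s').smul_measure ENNReal.ofReal_ne_top
  refine ⟨fun k => (main k).1, fun k => (main k).2, ?_⟩
  intro k s a
  obtain ⟨ihp, ihi⟩ := main k
  have hmap_int : ∀ (r : ℝ) s',
      Integrable (fun z : ℝ => z)
        (Measure.map (fun z => r + γ * z) (η k s' (astar k s'))) := by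
    intro r s'
    rw [integrable_map_measure measurable_id'.aestronglyMeasurable (hf r).aemeasurable]
    exact (integrable_const r).add ((ihi s' (astar k s')).const_mul γ)
  rw [hstep k s a]
  rw [integral_finset_sum_measure fun r hr => integrable_finset_sum_measure.mpr
    fun s' _ => (hmap_int r s').smul_measure ENNReal.ofReal_ne_top]
  refine Finset.sum_congr rfl fun r hr => ?_
  rw [integral_finset_sum_measure fun s' _ =>
    (hmap_int r s').smul_measure ENNReal.ofReal_ne_top]
  refine Finset.sum_congr rfl fun s' _ => ?_
  rw [integral_smul_measure, ENNReal.toReal_ofReal (hρ_nonneg s a r s'), smul_eq_mul]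
  congr 1
  rw [integral_map (hf r).aemeasurable measurable_id'.aestronglyMeasurable]
  haveI := ihp s' (astar k s')
  rw [show (fun z : ℝ => (fun z : ℝ => z) (r + γ * z)) = fun z : ℝ => r + γ * z from rfl,
    integral_add (integrable_const r) ((ihi s' (astar k s')).const_mul γ),
    integral_const, probReal_univ, one_smul,
    MeasureTheory.integral_const_mul, hgreedy k s']
end

section
/- Let h : ℝ → ℝ be an odd, strictly increasing bijection that is strictly concave on [0,∞). Then there exist a finite MDP M = (S, A, R, ρ) with discount factor γ ∈ (0,1), Q-functions Q_h and Q* : S×A → ℝ with 𝒯_h Q_h = Q_h and 𝒯* Q* = Q*, and a state s ∈ S such that the sets argmax_{a∈A} Q_h(s,a) and argmax_{a∈A} Q*(s,a) are disjoint; that is, the greedy policy induced by the fixed point of 𝒯_h does not agree at s with any action that is greedy for the optimal Q-function, so the fixed point of 𝒯_h does not yield an optimal policy. -/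
private lemma sup2 (f : Fin (1+1) → ℝ) :
    Finset.univ.sup' Finset.univ_nonempty f = max (f 0) (f 1) := by
  apply le_antisymm
  · apply Finset.sup'_le
    intro i _
    fin_cases i
    · exact le_max_left _ _
    · exact le_max_right _ _
  · exact max_le (Finset.le_sup' f (Finset.mem_univ 0)) (Finset.le_sup' f (Finset.mem_univ 1))

/-- For any odd, strictly increasing bijection `h : ℝ → ℝ` that is strictly
concave on `[0,∞)`, there exists a finite MDP (with nonempty finite state and action spaces,
a finite reward set `R ⊆ ℝ`, transition kernel `ρ`, and discount `γ ∈ (0,1)`), Q-functions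
`Qh` and `Qstar` that are fixed points of the transformed operator `𝒯_h` and of the Bellman
optimality operator `𝒯*` respectively, and a state `s` where the argmax sets of `Qh s` and
`Qstar s` are disjoint: the fixed point of `𝒯_h` does not yield an optimal policy. -/
theorem transformed_operator_fixed_point_not_optimal
    (h : ℝ → ℝ)
    (hodd : ∀ x, h (-x) = -h x)
    (hmono : StrictMono h)
    (hbij : Function.Bijective h)
    (hconc : StrictConcaveOn ℝ (Set.Ici 0) h) :
    ∃ (nS nA : ℕ) (R : Finset ℝ)
      (ρ : Fin (nS + 1) → Fin (nA + 1) → ℝ → Fin (nS + 1) → ℝ)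
      (γ : ℝ) (Qh Qstar : Fin (nS + 1) → Fin (nA + 1) → ℝ) (s : Fin (nS + 1)),
      γ ∈ Set.Ioo (0 : ℝ) 1 ∧
      (∀ s a r s', 0 ≤ ρ s a r s') ∧
      (∀ s a, ∑ r ∈ R, ∑ s', ρ s a r s' = 1) ∧
      -- `Qh` is a fixed point of the transformed operator `𝒯_h`
      (∀ s a, Qh s a = ∑ r ∈ R, ∑ s', ρ s a r s' *
        h (r + γ * Finset.univ.sup' Finset.univ_nonempty
            (fun a' => Function.invFun h (Qh s' a')))) ∧
      -- `Qstar` is a fixed point of the Bellman optimality operator `𝒯*`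
      (∀ s a, Qstar s a = ∑ r ∈ R, ∑ s', ρ s a r s' *
        (r + γ * Finset.univ.sup' Finset.univ_nonempty (fun a' => Qstar s' a'))) ∧
      -- at state `s`, no `𝒯_h`-greedy action is optimal
      Disjoint {a | Qh s a = Finset.univ.sup' Finset.univ_nonempty (Qh s)}
        {a | Qstar s a = Finset.univ.sup' Finset.univ_nonempty (Qstar s)} := by
  have h0 : h 0 = 0 := by have := hodd 0; simp at this; linarith
  have h02 : h 0 < h 2 := hmono (by norm_num)
  have hc : (1/2 : ℝ) • h 0 + (1/2 : ℝ) • h 2 < h ((1/2 : ℝ) • (0:ℝ) + (1/2 : ℝ) • (2:ℝ)) :=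
    hconc.2 (by simp : (0:ℝ) ∈ Set.Ici (0:ℝ)) (by norm_num : (2:ℝ) ∈ Set.Ici (0:ℝ))
      (by norm_num) (by norm_num) (by norm_num) (by norm_num)
  have hc' : h 2 / 2 < h 1 := by
    have : ((1/2 : ℝ) • (0:ℝ) + (1/2 : ℝ) • (2:ℝ)) = 1 := by norm_num
    rw [this] at hc; simp [smul_eq_mul, h0] at hc; linarith
  obtain ⟨m, hm⟩ := hbij.surjective ((h 2 / 2 + h 1) / 2)
  have hm_lt : h m < h 1 := by rw [hm]; linarith
  have hm_gt : h 2 / 2 < h m := by rw [hm]; linarith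
  have h2pos : 0 < h 2 := by rw [← h0]; exact h02
  have hm0 : 0 < m := hmono.lt_iff_lt.mp (by rw [h0]; linarith)
  have hm1 : m < 1 := hmono.lt_iff_lt.mp hm_lt
  have hmne0 : m ≠ 0 := ne_of_gt hm0
  have hmne2 : m ≠ 2 := by linarith
  have h0m : (0:ℝ) ≠ m := Ne.symm hmne0
  have h2m : (2:ℝ) ≠ m := Ne.symm hmne2
  have invh0 : Function.invFun h 0 = 0 := by
    conv_lhs => rw [← h0]
    exact Function.leftInverse_invFun hbij.injective 0
  refine ⟨1, 1, ({0, 2, m} : Finset ℝ),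
    fun s a r s' =>
      if s' = 1 then
        (if s = 0 then
          (if a = 0 then (if r = m then 1 else 0)
           else (if r = 0 then 1/2 else if r = 2 then 1/2 else 0))
         else (if r = 0 then 1 else 0))
      else 0,
    1/2,
    fun s a => if s = 0 then (if a = 0 then h m else h 2 / 2) else 0,
    fun s a => if s = 0 then (if a = 0 then m else 1) else 0,
    0, ?_, ?_, ?_, ?_, ?_, ?_⟩
  · constructor <;> norm_num
  · intro s a r s'
    dsimp only
    split_ifs <;> norm_num
  · intro s a
    rw [Finset.sum_insert (by simp [hmne0.symm]), Finset.sum_insert (by simp [hmne2.symm]),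
      Finset.sum_singleton]
    fin_cases s <;> fin_cases a <;>
      simp [Fin.sum_univ_two, hmne0, hmne2, h0m, h2m] <;> norm_num
  · intro s a
    rw [Finset.sum_insert (by simp [hmne0.symm]), Finset.sum_insert (by simp [hmne2.symm]),
      Finset.sum_singleton]
    fin_cases s <;> fin_cases a <;>
      simp [Fin.sum_univ_two, hmne0, hmne2, h0m, h2m, sup2, invh0, h0] <;> norm_num <;> ring
  · intro s a
    rw [Finset.sum_insert (by simp [hmne0.symm]), Finset.sum_insert (by simp [hmne2.symm]),
      Finset.sum_singleton]
    fin_cases s <;> fin_cases a <;>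
      simp [Fin.sum_univ_two, hmne0, hmne2, h0m, h2m, sup2] <;> norm_num <;> linarith
  · rw [Set.disjoint_left]
    intro a ha hb
    simp only [Set.mem_setOf_eq, sup2] at ha hb
    fin_cases a <;> simp at ha hb <;> linarith
end

section
/- Let M = (S, A, R, ρ) be a finite MDP with discount factor γ ∈ (0,1), let J ⊆ ℝ be an open interval and φ : ℝ → J a homeomorphism. Let ξ_0 be a conjugate collection all of whose measures have support contained in a fixed closed bounded interval I ⊂ J. Define iterates ξ_k := T_φ ξ_{k−1}, where at each step an arbitrary greedy selection for ξ_{k−1} is used. Then every ξ_k is a well-defined conjugate collection (in particular φ⁻¹ is integrable with respect to each of its measures), and the Q-functions Q_k(s,a) := ∫_J φ⁻¹(w) dξ_k^{(s,a)}(w) satisfy the Bellman iteration Q_k = 𝒯* Q_{k−1} for all k ≥ 1. -/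
open MeasureTheory

/-- Let `φ : ℝ → J` be a homeomorphism onto an open interval `J ⊆ ℝ`
(modelled by `φ : ℝ → ℝ` continuous with range `J`, `J` open and order-connected, with
inverse `φinv` continuous on `J`). Starting from a conjugate collection `ξ 0` of probability
measures supported in a closed bounded interval `[c,d] ⊆ J` (with `φinv` integrable), the
iterates `ξ (k+1) = T_φ (ξ k)` of the conjugated distributional optimality operator (with an
arbitrary greedy selection at each step) remain well-defined conjugate collections --
probability measures concentrated on `J` with `φinv` integrable -- and the Q-functions
`Q_k(s,a) = ∫_J φ⁻¹ dξ_k^{(s,a)}` satisfy the Bellman iteration `Q_{k+1} = 𝒯* Q_k`. -/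
theorem conjugated_operator_iterates_bellman
    {S A : Type} [Fintype S] [Fintype A] [Nonempty S] [Nonempty A]
    (R : Finset ℝ) (ρ : S → A → ℝ → S → ℝ)
    (hρ_nonneg : ∀ s a r s', 0 ≤ ρ s a r s')
    (hρ_sum : ∀ s a, ∑ r ∈ R, ∑ s' : S, ρ s a r s' = 1)
    (γ : ℝ) (hγ : γ ∈ Set.Ioo (0 : ℝ) 1)
    (J : Set ℝ) (hJopen : IsOpen J) (hJconn : J.OrdConnected)
    (φ φinv : ℝ → ℝ)
    (hφcont : Continuous φ) (hφrange : Set.range φ = J)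
    (hleft : ∀ x, φinv (φ x) = x) (hright : ∀ w ∈ J, φ (φinv w) = w)
    (hφinvcont : ContinuousOn φinv J)
    (ξ : ℕ → S → A → Measure ℝ)
    (hξ0_prob : ∀ s a, IsProbabilityMeasure (ξ 0 s a))
    (c d : ℝ) (hIJ : Set.Icc c d ⊆ J)
    (hξ0_supp : ∀ s a, ξ 0 s a (Set.Icc c d)ᶜ = 0)
    (hξ0_int : ∀ s a, IntegrableOn φinv J (ξ 0 s a))
    (astar : ℕ → S → A)
    (hgreedy : ∀ k s', (∫ w in J, φinv w ∂(ξ k s' (astar k s'))) =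
      Finset.univ.sup' Finset.univ_nonempty
        (fun a' => ∫ w in J, φinv w ∂(ξ k s' a')))
    (hstep : ∀ k s a, ξ (k + 1) s a = ∑ r ∈ R, ∑ s' : S,
      ENNReal.ofReal (ρ s a r s') •
        Measure.map (fun w => φ (r + γ * φinv w)) (ξ k s' (astar k s'))) :
    (∀ k s a, IsProbabilityMeasure (ξ k s a)) ∧
    (∀ k s a, ξ k s a Jᶜ = 0) ∧
    (∀ k s a, IntegrableOn φinv J (ξ k s a)) ∧
    (∀ k s a, (∫ w in J, φinv w ∂(ξ (k + 1) s a)) =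
      ∑ r ∈ R, ∑ s' : S, ρ s a r s' *
        (r + γ * Finset.univ.sup' Finset.univ_nonempty
          (fun a' => ∫ w in J, φinv w ∂(ξ k s' a')))) := by
  obtain ⟨hγ0, hγ1⟩ := hγ
  have hJmeas : MeasurableSet J := hJopen.measurableSet
  have hfmem : ∀ (r w : ℝ), φ (r + γ * φinv w) ∈ J := fun r w =>
    hφrange ▸ Set.mem_range_self _
  have hfcont : ∀ r : ℝ, ContinuousOn (fun w => φ (r + γ * φinv w)) J := fun r =>
    hφcont.comp_continuousOn (continuousOn_const.add (continuousOn_const.mul hφinvcont))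
  -- restrict to J is the identity for measures concentrated on J
  have hres : ∀ ν : Measure ℝ, ν Jᶜ = 0 → ν.restrict J = ν := fun ν hν =>
    Measure.restrict_eq_self_of_ae_mem (by
      rw [MeasureTheory.ae_iff]
      exact hν)
  -- a.e.-measurability of the maps w.r.t. measures concentrated on J
  have haem : ∀ (r : ℝ) (ν : Measure ℝ), ν Jᶜ = 0 →
      AEMeasurable (fun w => φ (r + γ * φinv w)) ν := by
    intro r ν hν
    have := (hfcont r).aemeasurable hJmeas (μ := ν)
    rwa [hres ν hν] at this
  -- a.e.-strong-measurability of φinv w.r.t. measures concentrated on J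
  have hinvmeas : ∀ ν : Measure ℝ, ν Jᶜ = 0 → AEStronglyMeasurable φinv ν := by
    intro ν hν
    have := (hφinvcont.aemeasurable hJmeas (μ := ν)).aestronglyMeasurable
    rwa [hres ν hν] at this
  -- pushforward measures are concentrated on J
  have hmapc : ∀ (r : ℝ) (ν : Measure ℝ), ν Jᶜ = 0 →
      Measure.map (fun w => φ (r + γ * φinv w)) ν Jᶜ = 0 := by
    intro r ν hν
    rw [Measure.map_apply_of_aemeasurable (haem r ν hν) hJmeas.compl]
    have : (fun w => φ (r + γ * φinv w)) ⁻¹' Jᶜ = ∅ := by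
      ext w; simp [hfmem r w]
    rw [this, measure_empty]
  -- the main invariant, by induction
  have key : ∀ k, (∀ s a, IsProbabilityMeasure (ξ k s a)) ∧
      (∀ s a, ξ k s a Jᶜ = 0) ∧ (∀ s a, IntegrableOn φinv J (ξ k s a)) := by
    intro k
    induction k with
    | zero =>
      refine ⟨hξ0_prob, ?_, hξ0_int⟩
      intro s a
      exact measure_mono_null (Set.compl_subset_compl.mpr hIJ) (hξ0_supp s a)
    | succ k ih =>
      obtain ⟨ihp, ihc, ihi⟩ := ih
      have hint : ∀ s' a', Integrable φinv (ξ k s' a') := by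
        intro s' a'
        have := ihi s' a'
        rwa [IntegrableOn, hres _ (ihc s' a')] at this
      -- each summand is integrable
      have hterm_int : ∀ (x r : ℝ) (s' : S),
          Integrable φinv (ENNReal.ofReal x •
            Measure.map (fun w => φ (r + γ * φinv w)) (ξ k s' (astar k s'))) := by
        intro x r s'
        refine Integrable.smul_measure ?_ ENNReal.ofReal_ne_top
        haveI := ihp s' (astar k s')
        rw [integrable_map_measure (hinvmeas _ (hmapc r _ (ihc s' (astar k s'))))
          (haem r _ (ihc s' (astar k s')))]
        have hcomp : (φinv ∘ fun w => φ (r + γ * φinv w)) = fun w => r + γ * φinv w :=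
          funext fun w => hleft _
        rw [hcomp]
        exact (integrable_const r).add ((hint s' (astar k s')).const_mul γ)
      have hconc : ∀ s a, ξ (k + 1) s a Jᶜ = 0 := by
        intro s a
        rw [hstep k s a, Measure.finset_sum_apply]
        refine Finset.sum_eq_zero fun r _ => ?_
        rw [Measure.finset_sum_apply]
        refine Finset.sum_eq_zero fun s' _ => ?_
        rw [Measure.smul_apply, hmapc r _ (ihc s' (astar k s')), smul_zero]
      refine ⟨?_, hconc, ?_⟩
      · intro s a
        constructor
        rw [hstep k s a, Measure.finset_sum_apply]
        have : ∀ r ∈ R, (∑ s' : S, ENNReal.ofReal (ρ s a r s') •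
            Measure.map (fun w => φ (r + γ * φinv w)) (ξ k s' (astar k s'))) Set.univ
            = ENNReal.ofReal (∑ s' : S, ρ s a r s') := by
          intro r _
          rw [Measure.finset_sum_apply,
            ENNReal.ofReal_sum_of_nonneg (fun s' _ => hρ_nonneg s a r s')]
          refine Finset.sum_congr rfl fun s' _ => ?_
          haveI := ihp s' (astar k s')
          haveI : IsProbabilityMeasure
              (Measure.map (fun w => φ (r + γ * φinv w)) (ξ k s' (astar k s'))) :=
            Measure.isProbabilityMeasure_map (haem r _ (ihc s' (astar k s')))
          rw [Measure.smul_apply, measure_univ, smul_eq_mul, mul_one]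
        rw [Finset.sum_congr rfl this,
          ← ENNReal.ofReal_sum_of_nonneg
            (fun r _ => Finset.sum_nonneg fun s' _ => hρ_nonneg s a r s'),
          hρ_sum s a, ENNReal.ofReal_one]
      · intro s a
        rw [IntegrableOn, hres _ (hconc s a), hstep k s a]
        rw [integrable_finset_sum_measure]
        intro r _
        rw [integrable_finset_sum_measure]
        intro s' _
        exact hterm_int (ρ s a r s') r s'
  refine ⟨fun k => (key k).1, fun k => (key k).2.1, fun k => (key k).2.2, ?_⟩
  intro k s a
  obtain ⟨kp, kc, ki⟩ := key k
  obtain ⟨kp', kc', ki'⟩ := key (k + 1)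
  have hint : ∀ s' a', Integrable φinv (ξ k s' a') := by
    intro s' a'
    have := ki s' a'
    rwa [IntegrableOn, hres _ (kc s' a')] at this
  have hterm_int : ∀ (r : ℝ) (s' : S),
      Integrable φinv (ENNReal.ofReal (ρ s a r s') •
        Measure.map (fun w => φ (r + γ * φinv w)) (ξ k s' (astar k s'))) := by
    intro r s'
    refine Integrable.smul_measure ?_ ENNReal.ofReal_ne_top
    haveI := kp s' (astar k s')
    rw [integrable_map_measure (hinvmeas _ (hmapc r _ (kc s' (astar k s'))))
      (haem r _ (kc s' (astar k s')))]
    have hcomp : (φinv ∘ fun w => φ (r + γ * φinv w)) = fun w => r + γ * φinv w :=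
      funext fun w => hleft _
    rw [hcomp]
    exact (integrable_const r).add ((hint s' (astar k s')).const_mul γ)
  calc (∫ w in J, φinv w ∂(ξ (k + 1) s a)) = ∫ w, φinv w ∂(ξ (k + 1) s a) := by
        rw [hres _ (kc' s a)]
    _ = ∑ r ∈ R, ∑ s' : S, ρ s a r s' *
        (r + γ * Finset.univ.sup' Finset.univ_nonempty
          (fun a' => ∫ w in J, φinv w ∂(ξ k s' a'))) := by
        rw [hstep k s a,
          integral_finset_sum_measure (by
            intro r _
            rw [integrable_finset_sum_measure]
            exact fun s' _ => hterm_int r s')]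
        refine Finset.sum_congr rfl fun r _ => ?_
        rw [integral_finset_sum_measure (fun s' _ => hterm_int r s')]
        refine Finset.sum_congr rfl fun s' _ => ?_
        haveI := kp s' (astar k s')
        rw [integral_smul_measure,
          integral_map (haem r _ (kc s' (astar k s'))) (hinvmeas _ (hmapc r _ (kc s' (astar k s'))))]
        simp only [hleft]
        rw [integral_add (integrable_const r) ((hint s' (astar k s')).const_mul γ),
          integral_const, integral_const_mul, probReal_univ]
        have hQ : ∫ w, φinv w ∂(ξ k s' (astar k s')) = Finset.univ.sup' Finset.univ_nonempty
            (fun a' => ∫ w in J, φinv w ∂(ξ k s' a')) := by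
          rw [← hres _ (kc s' (astar k s'))]
          exact hgreedy k s'
        rw [hQ, ENNReal.toReal_ofReal (hρ_nonneg s a r s')]
        simp [smul_eq_mul]
end
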